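/- Let f, g ∈ P₂(ℝ) have continuous, strictly positive probability density functions, with F the CDF of f (with inverse F^{-1}), G the CDF of g, and G^{-1} the quantile function of g. Set T = G^{-1} ∘ F. Let f = Σ_{k=1}^K π_k f_k be a mixture decomposition with weights π_k ≥ 0 summing to one and continuous component densities f_k. Then, for each k, the pushforward of the measure with density f_k under the map T has density g_k(x) = g(x) · f_k(F^{-1}(G(x))) / Σ_{l=1}^K π_l f_l(F^{-1}(G(x))), each g_k is a probability density, and Σ_{k=1}^K π_k g_k = g. -/

import Mathlib

open MeasureTheory ProbabilityTheory ENNReal Filter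

/-- Squared 2-Wasserstein distance between two measures on `ℝ`, defined as the infimum of
`∫ (x - y)^2 dγ` over all coupling probability measures `γ` with the given marginals. -/
noncomputable def W2sq (μ ν : MeasureTheory.Measure ℝ) : ℝ≥0∞ :=
  ⨅ (γ : MeasureTheory.Measure (ℝ × ℝ)) (_ : MeasureTheory.IsProbabilityMeasure γ)
    (_ : γ.map Prod.fst = μ) (_ : γ.map Prod.snd = ν),
    ∫⁻ p, ENNReal.ofReal ((p.1 - p.2) ^ 2) ∂γ

/-- The 2-Wasserstein distance `W₂`. -/
noncomputable def W2 (μ ν : MeasureTheory.Measure ℝ) : ℝ :=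
  Real.sqrt (W2sq μ ν).toReal

/-- `μ ∈ P₂(ℝ)`: a Borel probability measure on `ℝ` with finite second moment. -/
def MemP2 (μ : MeasureTheory.Measure ℝ) : Prop :=
  MeasureTheory.IsProbabilityMeasure μ ∧ (∫⁻ x, ENNReal.ofReal (x ^ 2) ∂μ) < ⊤


open Set


section AuxCDF

variable {d : ℝ → ℝ}

lemma aux_cdf_eq_integral (hdc : Continuous d) (hdnn : ∀ x, 0 ≤ d x)
    (hprob : IsProbabilityMeasure (volume.withDensity fun x => ENNReal.ofReal (d x))) (x : ℝ) :
    cdf (volume.withDensity fun x => ENNReal.ofReal (d x)) x = ∫ y in Iic x, d y := by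
  rw [cdf_eq_real, measureReal_def, withDensity_apply _ measurableSet_Iic,
    integral_eq_lintegral_of_nonneg_ae (Filter.Eventually.of_forall fun y => hdnn y)
      hdc.aestronglyMeasurable.restrict]

lemma aux_integrable (hdc : Continuous d) (hdnn : ∀ x, 0 ≤ d x)
    (hprob : IsProbabilityMeasure (volume.withDensity fun x => ENNReal.ofReal (d x))) :
    Integrable d := by
  refine ⟨hdc.aestronglyMeasurable, ?_⟩
  rw [hasFiniteIntegral_iff_ofReal (Filter.Eventually.of_forall hdnn)]
  have h : ∫⁻ y, ENNReal.ofReal (d y) ∂volume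
      = (volume.withDensity fun x => ENNReal.ofReal (d x)) Set.univ := by
    rw [withDensity_apply _ MeasurableSet.univ, setLIntegral_univ]
  rw [h, measure_univ]
  exact ENNReal.one_lt_top

lemma aux_cdf_sub (hdc : Continuous d) (hdnn : ∀ x, 0 ≤ d x)
    (hprob : IsProbabilityMeasure (volume.withDensity fun x => ENNReal.ofReal (d x)))
    {a b : ℝ} (hab : a ≤ b) :
    cdf (volume.withDensity fun x => ENNReal.ofReal (d x)) b
      = cdf (volume.withDensity fun x => ENNReal.ofReal (d x)) a + ∫ y in a..b, d y := by
  rw [aux_cdf_eq_integral hdc hdnn hprob, aux_cdf_eq_integral hdc hdnn hprob,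
    intervalIntegral.integral_of_le hab, ← Set.Iic_union_Ioc_eq_Iic hab,
    setIntegral_union (Set.Iic_disjoint_Ioc le_rfl) measurableSet_Ioc
      ((aux_integrable hdc hdnn hprob).integrableOn)
      ((aux_integrable hdc hdnn hprob).integrableOn)]

lemma aux_hasDerivAt_cdf (hdc : Continuous d) (hdnn : ∀ x, 0 ≤ d x)
    (hprob : IsProbabilityMeasure (volume.withDensity fun x => ENNReal.ofReal (d x))) (x : ℝ) :
    HasDerivAt (cdf (volume.withDensity fun x => ENNReal.ofReal (d x))) (d x) x := by
  have hid : ∀ y : ℝ, (cdf (volume.withDensity fun x => ENNReal.ofReal (d x))) y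
      = (cdf (volume.withDensity fun x => ENNReal.ofReal (d x))) 0 + ∫ t in (0:ℝ)..y, d t := by
    intro y
    rcases le_total (0:ℝ) y with h | h
    · exact aux_cdf_sub hdc hdnn hprob h
    · have h2 := aux_cdf_sub hdc hdnn hprob h
      rw [intervalIntegral.integral_symm]
      linarith
  have h1 : HasDerivAt (fun y : ℝ =>
      (cdf (volume.withDensity fun x => ENNReal.ofReal (d x))) 0 + ∫ t in (0:ℝ)..y, d t)
      (d x) x :=
    (intervalIntegral.integral_hasDerivAt_right (hdc.intervalIntegrable 0 x)
      (hdc.stronglyMeasurableAtFilter _ _) hdc.continuousAt).const_add _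
  exact h1.congr_of_eventuallyEq (Filter.Eventually.of_forall hid)

lemma aux_strictMono_cdf (hdc : Continuous d) (hdpos : ∀ x, 0 < d x)
    (hprob : IsProbabilityMeasure (volume.withDensity fun x => ENNReal.ofReal (d x))) :
    StrictMono (cdf (volume.withDensity fun x => ENNReal.ofReal (d x))) := by
  intro a b hab
  have h := aux_cdf_sub hdc (fun x => (hdpos x).le) hprob hab.le
  have hpos : 0 < ∫ y in a..b, d y :=
    intervalIntegral.intervalIntegral_pos_of_pos_on (hdc.intervalIntegrable a b)
      (fun x _ => hdpos x) hab
  linarith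

lemma aux_cdf_mem_Ioo (hdc : Continuous d) (hdpos : ∀ x, 0 < d x)
    (hprob : IsProbabilityMeasure (volume.withDensity fun x => ENNReal.ofReal (d x))) (x : ℝ) :
    cdf (volume.withDensity fun x => ENNReal.ofReal (d x)) x ∈ Set.Ioo (0:ℝ) 1 := by
  constructor
  · exact lt_of_le_of_lt (cdf_nonneg _ (x - 1))
      (aux_strictMono_cdf hdc hdpos hprob (by linarith))
  · exact lt_of_lt_of_le (aux_strictMono_cdf hdc hdpos hprob (show x < x + 1 by linarith))
      (cdf_le_one _ (x + 1))

lemma aux_continuousAt_inv_cdf (μ : Measure ℝ) (Finv : ℝ → ℝ)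
    (hmono : StrictMono (cdf μ)) (h01 : ∀ x, cdf μ x ∈ Set.Ioo (0:ℝ) 1)
    (hFinv' : ∀ s ∈ Set.Ioo (0:ℝ) 1, cdf μ (Finv s) = s) {s : ℝ} (hs : s ∈ Set.Ioo (0:ℝ) 1) :
    ContinuousAt Finv s := by
  rw [ContinuousAt]
  refine tendsto_order.2 ⟨?_, ?_⟩
  · intro b hb
    have hb' : cdf μ b < s := by
      have := hmono hb; rwa [hFinv' s hs] at this
    filter_upwards [Ioo_mem_nhds hb' hs.2] with t ht
    have ht01 : t ∈ Set.Ioo (0:ℝ) 1 := ⟨(h01 b).1.trans ht.1, ht.2⟩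
    have : cdf μ b < cdf μ (Finv t) := by rw [hFinv' t ht01]; exact ht.1
    exact hmono.lt_iff_lt.mp this
  · intro b hb
    have hb' : s < cdf μ b := by
      have := hmono hb; rwa [hFinv' s hs] at this
    filter_upwards [Ioo_mem_nhds hs.1 hb'] with t ht
    have ht01 : t ∈ Set.Ioo (0:ℝ) 1 := ⟨ht.1, ht.2.trans (h01 b).2⟩
    have : cdf μ (Finv t) < cdf μ b := by rw [hFinv' t ht01]; exact ht.2
    exact hmono.lt_iff_lt.mp this

lemma aux_withDensity_finsetSum {ι : Type*} (s : Finset ι) (h : ι → ℝ → ℝ≥0∞)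
    (hm : ∀ i, Measurable (h i)) :
    volume.withDensity (fun x => ∑ i ∈ s, h i x) = ∑ i ∈ s, volume.withDensity (h i) := by
  classical
  induction s using Finset.induction with
  | empty => simp
  | insert a s hnotmem ih =>
      simp only [Finset.sum_insert hnotmem]
      rw [← ih, ← withDensity_add_left (hm a)]
      rfl

end AuxCDF


set_option maxHeartbeats 1000000 in
/-- The pushforward of each mixture component f_k under the optimal transport map
T = G⁻¹ ∘ F has density g_k(x) = g(x) · f_k(F⁻¹(G(x))) / Σ_l π_l f_l(F⁻¹(G(x)));
each g_k is a probability density, and Σ_k π_k g_k = g. -/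
theorem pushforward_mixture_components
    (K : ℕ) (hK : 0 < K) (w : Fin K → ℝ) (hw : ∀ k, 0 ≤ w k) (hsum : ∑ k, w k = 1)
    (f g : Measure ℝ) (hf : MemP2 f) (hg : MemP2 g)
    (df dg : ℝ → ℝ) (hdfc : Continuous df) (hdgc : Continuous dg)
    (hdfpos : ∀ x, 0 < df x) (hdgpos : ∀ x, 0 < dg x)
    (hfd : f = MeasureTheory.volume.withDensity (fun x => ENNReal.ofReal (df x)))
    (hgd : g = MeasureTheory.volume.withDensity (fun x => ENNReal.ofReal (dg x)))
    -- F⁻¹ : the inverse of the CDF F of f; G⁻¹ : the quantile function of g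
    (Finv Ginv : ℝ → ℝ)
    (hFinv : ∀ x : ℝ, Finv (ProbabilityTheory.cdf f x) = x)
    (hFinv' : ∀ s ∈ Set.Ioo (0 : ℝ) 1, ProbabilityTheory.cdf f (Finv s) = s)
    (hGinv : ∀ x : ℝ, Ginv (ProbabilityTheory.cdf g x) = x)
    (hGinv' : ∀ s ∈ Set.Ioo (0 : ℝ) 1, ProbabilityTheory.cdf g (Ginv s) = s)
    -- the mixture decomposition f = Σ π_k f_k with continuous component densities
    (dfk : Fin K → ℝ → ℝ) (hdfkc : ∀ k, Continuous (dfk k)) (hdfknn : ∀ k x, 0 ≤ dfk k x)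
    (hfkprob : ∀ k, IsProbabilityMeasure
      (MeasureTheory.volume.withDensity fun x => ENNReal.ofReal (dfk k x)))
    (hfdec : f = ∑ k, ENNReal.ofReal (w k) •
      MeasureTheory.volume.withDensity fun x => ENNReal.ofReal (dfk k x)) :
    (fun (gk : Fin K → ℝ → ℝ) =>
      (∀ k, Measure.map (Ginv ∘ fun x => ProbabilityTheory.cdf f x)
          (MeasureTheory.volume.withDensity fun x => ENNReal.ofReal (dfk k x))
        = MeasureTheory.volume.withDensity fun x => ENNReal.ofReal (gk k x)) ∧
      (∀ k, IsProbabilityMeasure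
        (MeasureTheory.volume.withDensity fun x => ENNReal.ofReal (gk k x))) ∧
      (∀ x, ∑ k, w k * gk k x = dg x))
      (fun k x => dg x * dfk k (Finv (ProbabilityTheory.cdf g x)) /
        ∑ l, w l * dfk l (Finv (ProbabilityTheory.cdf g x))) := by
  obtain ⟨hfprob, -⟩ := hf
  obtain ⟨hgprob, -⟩ := hg
  have hdfnn : ∀ x, 0 ≤ df x := fun x => (hdfpos x).le
  have hdgnn : ∀ x, 0 ≤ dg x := fun x => (hdgpos x).le
  subst hfd; subst hgd
  -- basic facts about the cdfs
  have hFderiv := aux_hasDerivAt_cdf hdfc hdfnn hfprob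
  have hGderiv := aux_hasDerivAt_cdf hdgc hdgnn hgprob
  have hFmono := aux_strictMono_cdf hdfc hdfpos hfprob
  have hGmono := aux_strictMono_cdf hdgc hdgpos hgprob
  have hF01 := aux_cdf_mem_Ioo hdfc hdfpos hfprob
  have hG01 := aux_cdf_mem_Ioo hdgc hdgpos hgprob
  set F := cdf (volume.withDensity fun x => ENNReal.ofReal (df x)) with hFdef
  set G := cdf (volume.withDensity fun x => ENNReal.ofReal (dg x)) with hGdef
  -- the density sum identity
  have hdf_sum : ∀ x, (∑ l, w l * dfk l x) = df x := by
    have hmeas : ∀ (h : ℝ → ℝ), Continuous h → Measurable fun x => ENNReal.ofReal (h x) :=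
      fun h hc => ENNReal.continuous_ofReal.comp hc |>.measurable
    have h1 : volume.withDensity (fun x => ENNReal.ofReal (df x))
        = volume.withDensity (fun x => ENNReal.ofReal (∑ l, w l * dfk l x)) := by
      rw [hfdec]
      have h2 : (fun x => ENNReal.ofReal (∑ l, w l * dfk l x))
          = fun x => ∑ l, ENNReal.ofReal (w l) * ENNReal.ofReal (dfk l x) := by
        funext x
        rw [ENNReal.ofReal_sum_of_nonneg (fun l _ => mul_nonneg (hw l) (hdfknn l x))]
        exact Finset.sum_congr rfl fun l _ => ENNReal.ofReal_mul (hw l)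
      rw [h2, aux_withDensity_finsetSum _ (fun l x => ENNReal.ofReal (w l) * ENNReal.ofReal (dfk l x))
        (fun l => (measurable_const.mul (hmeas _ (hdfkc l))))]
      refine Finset.sum_congr rfl fun l _ => ?_
      rw [← withDensity_smul _ (hmeas _ (hdfkc l))]
      rfl
    have hlint : ∫⁻ x, ENNReal.ofReal (df x) ∂volume ≠ ⊤ := by
      have : ∫⁻ x, ENNReal.ofReal (df x) ∂volume
          = (volume.withDensity fun x => ENNReal.ofReal (df x)) Set.univ := by
        rw [withDensity_apply _ MeasurableSet.univ, setLIntegral_univ]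
      rw [this, measure_univ]; exact ENNReal.one_ne_top
    have hae := (withDensity_eq_iff (hmeas _ hdfc).aemeasurable
      (hmeas _ (by continuity)).aemeasurable hlint).mp h1
    have heq := (Continuous.ae_eq_iff_eq volume
      (ENNReal.continuous_ofReal.comp hdfc)
      (ENNReal.continuous_ofReal.comp (by continuity))).mp hae
    intro x
    have := congrFun heq x
    simp only [Function.comp_apply] at this
    rw [ENNReal.ofReal_eq_ofReal_iff (hdfnn x)
      (Finset.sum_nonneg fun l _ => mul_nonneg (hw l) (hdfknn l x))] at this
    exact this.symm
  -- the transport map and its inverse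
  set S : ℝ → ℝ := fun y => Finv (G y) with hSdef
  set T : ℝ → ℝ := fun y => Ginv (F y) with hTdef
  have hFS : ∀ y, F (S y) = G y := fun y => hFinv' (G y) (hG01 y)
  have hST : ∀ y, S (T y) = y := by
    intro y
    show Finv (G (Ginv (F y))) = y
    rw [hGinv' (F y) (hF01 y), hFinv y]
  have hTS : ∀ y, T (S y) = y := by
    intro y
    show Ginv (F (S y)) = y
    rw [hFS y, hGinv y]
  have hSmono : StrictMono S := by
    intro a b hab
    have h1 : F (S a) < F (S b) := by rw [hFS, hFS]; exact hGmono hab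
    exact hFmono.lt_iff_lt.mp h1
  have hTmono : Monotone T := by
    intro a b hab
    have : S (T a) ≤ S (T b) := by rw [hST, hST]; exact hab
    exact hSmono.le_iff_le.mp this
  have hTmeas : Measurable T := hTmono.measurable
  -- derivative of S
  have hSderiv : ∀ x, HasDerivAt S ((df (S x))⁻¹ * dg x) x := by
    intro x
    have hFinvD : HasDerivAt Finv (df (Finv (G x)))⁻¹ (G x) := by
      have hcont : ContinuousAt Finv (G x) :=
        aux_continuousAt_inv_cdf _ Finv hFmono hF01 hFinv' (hG01 x)
      have hev : ∀ᶠ y in nhds (G x), F (Finv y) = y := by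
        filter_upwards [Ioo_mem_nhds (hG01 x).1 (hG01 x).2] with t ht
        exact hFinv' t ht
      exact (hFderiv (Finv (G x))).of_local_left_inverse hcont (hdfpos _).ne' hev
    exact hFinvD.comp x (hGderiv x)
  -- preimage/image identities
  have hTpre : ∀ a, T ⁻¹' (Set.Iic a) = Set.Iic (S a) := by
    intro a
    ext x
    simp only [Set.mem_preimage, Set.mem_Iic]
    constructor
    · intro h
      have : S (T x) ≤ S a := hSmono.monotone h
      rwa [hST] at this
    · intro h
      have : S (T x) ≤ S a := by rwa [hST]
      exact hSmono.le_iff_le.mp this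
  have hSimg : ∀ a, S '' (Set.Iic a) = Set.Iic (S a) := by
    intro a
    ext x
    simp only [Set.mem_image, Set.mem_Iic]
    constructor
    · rintro ⟨y, hy, rfl⟩
      exact hSmono.monotone hy
    · intro h
      refine ⟨T x, ?_, hST x⟩
      have : S (T x) ≤ S a := by rwa [hST]
      exact hSmono.le_iff_le.mp this
  -- the key computation on Iic sets
  have key : ∀ (k : Fin K) (a : ℝ),
      (volume.withDensity fun x => ENNReal.ofReal (dfk k x)) (Set.Iic (S a))
      = (volume.withDensity fun x => ENNReal.ofReal
          (dg x * dfk k (Finv (G x)) / ∑ l, w l * dfk l (Finv (G x)))) (Set.Iic a) := by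
    intro k a
    rw [withDensity_apply _ measurableSet_Iic, withDensity_apply _ measurableSet_Iic,
      ← hSimg a]
    rw [lintegral_image_eq_lintegral_abs_det_fderiv_mul volume measurableSet_Iic
      (f' := fun x => (1 : ℝ →L[ℝ] ℝ).smulRight ((df (S x))⁻¹ * dg x))
      (fun x _ => (hSderiv x).hasFDerivAt.hasFDerivWithinAt) hSmono.injective.injOn
      (fun y => ENNReal.ofReal (dfk k y))]
    refine setLIntegral_congr_fun measurableSet_Iic ?_
    intro x _
    dsimp only
    rw [ContinuousLinearMap.smulRight_one_eq_toSpanSingleton, ContinuousLinearMap.det_toSpanSingleton, hdf_sum (Finv (G x))]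
    have hpos : 0 < (df (S x))⁻¹ * dg x :=
      mul_pos (inv_pos.mpr (hdfpos _)) (hdgpos x)
    rw [abs_of_pos hpos, ← ENNReal.ofReal_mul hpos.le]
    congr 1
    have hSx : S x = Finv (G x) := rfl
    rw [← hSx, eq_div_iff (hdfpos (S x)).ne']
    field_simp
    rw [mul_comm (df (S x)) (dg x), mul_assoc, mul_div_assoc, mul_div_cancel_left₀ _ (hdfpos (S x)).ne']
  -- measurability of T and probability of pushforwards
  have hmapprob : ∀ k : Fin K, IsProbabilityMeasure
      (Measure.map T (volume.withDensity fun x => ENNReal.ofReal (dfk k x))) := by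
    intro k
    have := hfkprob k
    exact Measure.isProbabilityMeasure_map hTmeas.aemeasurable
  -- part 1
  have part1 : ∀ k : Fin K,
      Measure.map T (volume.withDensity fun x => ENNReal.ofReal (dfk k x))
      = volume.withDensity fun x => ENNReal.ofReal
          (dg x * dfk k (Finv (G x)) / ∑ l, w l * dfk l (Finv (G x))) := by
    intro k
    have := hmapprob k
    refine Measure.ext_of_Iic _ _ (fun a => ?_)
    rw [Measure.map_apply hTmeas measurableSet_Iic, hTpre a]
    exact key k a
  refine ⟨fun k => part1 k, fun k => ?_, fun x => ?_⟩
  · rw [← part1 k]; exact hmapprob k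
  · -- part 3
    have hD : (∑ l, w l * dfk l (Finv (G x))) = df (Finv (G x)) := hdf_sum _
    rw [show (∑ k, w k * (dg x * dfk k (Finv (G x)) / ∑ l, w l * dfk l (Finv (G x))))
        = (dg x / (∑ l, w l * dfk l (Finv (G x)))) * ∑ k, w k * dfk k (Finv (G x)) by
      rw [Finset.mul_sum]; exact Finset.sum_congr rfl fun k _ => by ring]
    rw [hD, div_mul_eq_mul_div, mul_div_assoc, div_self (hdfpos _).ne', mul_one]
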